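/- Let p be a prime and let (I, J) be an admissible index-pair for R(F_p). If J is nonempty, then J is infinite. (Consequently, if R(I,J) is just infinite then I or J must be the empty set.) -/

import Mathlib

open PowerSeries Finset

namespace RiordanPaper

variable {K : Type*} [CommRing K]

noncomputable def comp (f g : PowerSeries K) : PowerSeries K :=
  PowerSeries.mk fun n => ∑ d ∈ Finset.range (n + 1), coeff d f * coeff n (g ^ d)

lemma coeff_comp (f g : PowerSeries K) (n : ℕ) :
    coeff n (comp f g) = ∑ d ∈ Finset.range (n + 1), coeff d f * coeff n (g ^ d) := by
  simp [comp]

lemma coeff_pow_eq_zero {g : PowerSeries K} (hg : constantCoeff g = 0) {n d : ℕ}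
    (h : n < d) : coeff n (g ^ d) = 0 := by
  have hdvd : (X : PowerSeries K) ^ d ∣ g ^ d :=
    pow_dvd_pow_of_dvd (PowerSeries.X_dvd_iff.2 hg) d
  exact (PowerSeries.X_pow_dvd_iff.1 hdvd) n h

lemma coeff_comp_of_lt {g : PowerSeries K} (hg : constantCoeff g = 0)
    (f : PowerSeries K) {n N : ℕ} (hn : n < N) :
    coeff n (comp f g) = ∑ d ∈ Finset.range N, coeff d f * coeff n (g ^ d) := by
  rw [coeff_comp]
  apply Finset.sum_subset
  · intro d hd
    simp only [Finset.mem_range] at hd ⊢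
    omega
  · intro d _ hd'
    simp only [Finset.mem_range] at hd'
    rw [coeff_pow_eq_zero hg (by omega), mul_zero]

lemma coeff_eval₂ {g : PowerSeries K} (hg : constantCoeff g = 0)
    (P : Polynomial K) (n : ℕ) :
    coeff n (Polynomial.eval₂ C g P)
      = ∑ d ∈ Finset.range (n + 1), P.coeff d * coeff n (g ^ d) := by
  classical
  have h1 : P.natDegree < max (n + 1) (P.natDegree + 1) :=
    lt_of_lt_of_le (Nat.lt_succ_self _) (le_max_right _ _)
  rw [Polynomial.eval₂_eq_sum_range' C h1 g, map_sum]
  have h2 : ∀ d ∈ Finset.range (max (n + 1) (P.natDegree + 1)),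
      coeff n (C (P.coeff d) * g ^ d) = P.coeff d * coeff n (g ^ d) := fun d _ => by
    rw [coeff_C_mul]
  rw [Finset.sum_congr rfl h2]
  symm
  apply Finset.sum_subset
  · intro d hd
    simp only [Finset.mem_range] at hd ⊢
    omega
  · intro d _ hd'
    simp only [Finset.mem_range] at hd'
    rw [coeff_pow_eq_zero hg (by omega), mul_zero]

lemma coeff_comp_eq_eval₂_trunc {g : PowerSeries K} (hg : constantCoeff g = 0)
    (f : PowerSeries K) {n N : ℕ} (hn : n < N) :
    coeff n (comp f g) = coeff n (Polynomial.eval₂ C g (trunc N f)) := by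
  rw [coeff_eval₂ hg, coeff_comp]
  apply Finset.sum_congr rfl
  intro d hd
  simp only [Finset.mem_range] at hd
  rw [PowerSeries.coeff_trunc, if_pos (by omega)]

lemma mul_comp {g : PowerSeries K} (hg : constantCoeff g = 0) (f₁ f₂ : PowerSeries K) :
    comp (f₁ * f₂) g = comp f₁ g * comp f₂ g := by
  ext n
  have key : coeff n (comp (f₁ * f₂) g)
      = coeff n (Polynomial.eval₂ C g (trunc (n + 1) f₁ * trunc (n + 1) f₂)) := by
    rw [coeff_eval₂ hg, coeff_comp]
    apply Finset.sum_congr rfl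
    intro d hd
    simp only [Finset.mem_range] at hd
    congr 1
    rw [Polynomial.coeff_mul, PowerSeries.coeff_mul]
    apply Finset.sum_congr rfl
    intro ab hab
    rw [Finset.HasAntidiagonal.mem_antidiagonal] at hab
    rw [PowerSeries.coeff_trunc, PowerSeries.coeff_trunc, if_pos (by omega), if_pos (by omega)]
  rw [key, Polynomial.eval₂_mul, PowerSeries.coeff_mul, PowerSeries.coeff_mul]
  apply Finset.sum_congr rfl
  intro ab hab
  rw [Finset.HasAntidiagonal.mem_antidiagonal] at hab
  rw [← coeff_comp_eq_eval₂_trunc hg f₁ (show ab.1 < n + 1 by omega),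
    ← coeff_comp_eq_eval₂_trunc hg f₂ (show ab.2 < n + 1 by omega)]

lemma one_comp (g : PowerSeries K) : comp (1 : PowerSeries K) g = 1 := by
  ext n
  rw [coeff_comp, Finset.sum_eq_single 0]
  · simp
  · intro d _ hd0
    simp [PowerSeries.coeff_one, hd0]
  · intro h
    simp at h

lemma comp_X (f : PowerSeries K) : comp f X = f := by
  ext n
  rw [coeff_comp, Finset.sum_eq_single n]
  · rw [coeff_X_pow, if_pos rfl, mul_one]
  · intro d _ hdn
    rw [coeff_X_pow, if_neg (fun h => hdn h.symm), mul_zero]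
  · intro h
    simp at h

lemma X_comp {g : PowerSeries K} (hg : constantCoeff g = 0) : comp X g = g := by
  ext n
  rcases Nat.eq_zero_or_pos n with hn | hn
  · subst hn
    rw [coeff_comp]
    simp [PowerSeries.coeff_X, coeff_zero_eq_constantCoeff_apply, hg]
  · rw [coeff_comp, Finset.sum_eq_single 1]
    · rw [coeff_one_X, pow_one, one_mul]
    · intro d _ hd1
      rw [PowerSeries.coeff_X, if_neg hd1, zero_mul]
    · intro h
      simp only [Finset.mem_range] at h
      omega

lemma constantCoeff_comp (f g : PowerSeries K) :
    constantCoeff (comp f g) = constantCoeff f := by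
  rw [← coeff_zero_eq_constantCoeff_apply, coeff_comp]
  simp

lemma coeff_one_comp (f g : PowerSeries K) :
    coeff 1 (comp f g) = coeff 1 f * coeff 1 g := by
  rw [coeff_comp]
  have : Finset.range 2 = {0, 1} := rfl
  rw [this, Finset.sum_insert (by simp), Finset.sum_singleton, pow_zero, pow_one]
  simp [PowerSeries.coeff_one]

lemma comp_assoc {g k : PowerSeries K} (hg : constantCoeff g = 0)
    (hk : constantCoeff k = 0) (f : PowerSeries K) :
    comp (comp f g) k = comp f (comp g k) := by
  have hpow : ∀ e : ℕ, (comp g k) ^ e = comp (g ^ e) k := by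
    intro e
    induction e with
    | zero => simp [one_comp]
    | succ m ih => rw [pow_succ, pow_succ, ih, mul_comp hk]
  ext n
  rw [coeff_comp, coeff_comp]
  have L1 : ∀ d ∈ Finset.range (n + 1), coeff d (comp f g) * coeff n (k ^ d)
      = ∑ e ∈ Finset.range (n + 1), coeff e f * coeff d (g ^ e) * coeff n (k ^ d) := by
    intro d hd
    simp only [Finset.mem_range] at hd
    rw [coeff_comp_of_lt hg f hd, Finset.sum_mul]
  rw [Finset.sum_congr rfl L1, Finset.sum_comm]
  apply Finset.sum_congr rfl
  intro e _
  rw [hpow e, coeff_comp, Finset.mul_sum]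
  apply Finset.sum_congr rfl
  intro d _
  ring

/-- An element of the Riordan group: a pair `(h, g)` with
`h = 1 + a₁x + ⋯` and `g = x + b₂x² + ⋯`. -/
@[ext]
structure RiordanElem (K : Type*) [CommRing K] where
  h : PowerSeries K
  g : PowerSeries K
  h_zero : constantCoeff h = 1
  g_zero : constantCoeff g = 0
  g_one : coeff 1 g = 1

namespace RiordanElem

noncomputable instance : Mul (RiordanElem K) :=
  ⟨fun a b => ⟨a.h * comp b.h a.g, comp b.g a.g,
    by rw [map_mul, a.h_zero, one_mul, constantCoeff_comp, b.h_zero],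
    by rw [constantCoeff_comp, b.g_zero],
    by rw [coeff_one_comp, b.g_one, a.g_one, one_mul]⟩⟩

noncomputable instance : One (RiordanElem K) :=
  ⟨⟨1, X, map_one _, constantCoeff_X, coeff_one_X⟩⟩

@[simp] lemma mul_h (a b : RiordanElem K) : (a * b).h = a.h * comp b.h a.g := rfl
@[simp] lemma mul_g (a b : RiordanElem K) : (a * b).g = comp b.g a.g := rfl
@[simp] lemma one_h : (1 : RiordanElem K).h = 1 := rfl
@[simp] lemma one_g : (1 : RiordanElem K).g = X := rfl

noncomputable instance instMonoid : Monoid (RiordanElem K) where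
  mul_assoc a b c := by
    ext1
    · show (a.h * comp b.h a.g) * comp c.h (comp b.g a.g)
        = a.h * comp (b.h * comp c.h b.g) a.g
      rw [mul_comp a.g_zero, ← comp_assoc b.g_zero a.g_zero, mul_assoc]
    · show comp c.g (comp b.g a.g) = comp (comp c.g b.g) a.g
      rw [comp_assoc b.g_zero a.g_zero]
  one_mul a := by
    ext1
    · show (1 : PowerSeries K) * comp a.h X = a.h
      rw [comp_X, one_mul]
    · show comp a.g X = a.g
      exact comp_X a.g
  mul_one a := by
    ext1
    · show a.h * comp 1 a.g = a.h
      rw [one_comp, mul_one]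
    · show comp X a.g = a.g
      exact X_comp a.g_zero

end RiordanElem

/-- The Riordan group over `K`, realized as the units of the Riordan monoid. -/
noncomputable abbrev RiordanGroup (K : Type*) [CommRing K] := (RiordanElem K)ˣ

/-- An element of the Nottingham group: `g = x + b₂x² + ⋯`. -/
@[ext]
structure NottinghamElem (K : Type*) [CommRing K] where
  g : PowerSeries K
  g_zero : constantCoeff g = 0
  g_one : coeff 1 g = 1

namespace NottinghamElem

noncomputable instance : Mul (NottinghamElem K) :=
  ⟨fun a b => ⟨comp b.g a.g,
    by rw [constantCoeff_comp, b.g_zero],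
    by rw [coeff_one_comp, b.g_one, a.g_one, one_mul]⟩⟩

noncomputable instance : One (NottinghamElem K) :=
  ⟨⟨X, constantCoeff_X, coeff_one_X⟩⟩

@[simp] lemma mul_g (a b : NottinghamElem K) : (a * b).g = comp b.g a.g := rfl
@[simp] lemma one_g : (1 : NottinghamElem K).g = X := rfl

noncomputable instance instMonoid : Monoid (NottinghamElem K) where
  mul_assoc a b c := by
    ext1
    show comp c.g (comp b.g a.g) = comp (comp c.g b.g) a.g
    rw [comp_assoc b.g_zero a.g_zero]
  one_mul a := by
    ext1
    show comp a.g X = a.g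
    exact comp_X a.g
  mul_one a := by
    ext1
    show comp X a.g = a.g
    exact X_comp a.g_zero

end NottinghamElem

/-- The Nottingham group over `K`, realized as the units of the Nottingham monoid. -/
noncomputable abbrev NottinghamGroup (K : Type*) [CommRing K] := (NottinghamElem K)ˣ




/-- If `a` and `b` have zero constant term and agree below degree `n`, then for `d ≥ 2`
their `d`-th powers agree at degree `n`. -/
lemma coeff_pow_congr {a b : PowerSeries K} (ha : constantCoeff a = 0)
    (hb : constantCoeff b = 0) {n : ℕ} (h : ∀ m < n, coeff m a = coeff m b)
    {d : ℕ} (hd : 2 ≤ d) : coeff n (a ^ d) = coeff n (b ^ d) := by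
  have hdvd1 : (X : PowerSeries K) ^ n ∣ (a - b) := by
    rw [PowerSeries.X_pow_dvd_iff]
    intro m hm
    rw [map_sub, h m hm, sub_self]
  have hdvd2 : (X : PowerSeries K) ∣ ∑ i ∈ Finset.range d, a ^ i * b ^ (d - 1 - i) := by
    apply Finset.dvd_sum
    intro i hi
    rcases Nat.eq_zero_or_pos i with hi0 | hi0
    · subst hi0
      have : 1 ≤ d - 1 - 0 := by omega
      exact Dvd.dvd.mul_left (dvd_pow (PowerSeries.X_dvd_iff.2 hb) (by omega)) _
    · exact Dvd.dvd.mul_right (dvd_pow (PowerSeries.X_dvd_iff.2 ha) (by omega)) _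
  have key : (X : PowerSeries K) ^ (n + 1) ∣ a ^ d - b ^ d := by
    rw [← geom_sum₂_mul a b d, pow_succ']
    exact mul_dvd_mul hdvd2 hdvd1
  have := (PowerSeries.X_pow_dvd_iff.1 key) n (Nat.lt_succ_self n)
  rw [map_sub, sub_eq_zero] at this
  exact this

/-- Coefficients of the compositional inverse, defined by recursion. -/
noncomputable def invC (g : PowerSeries K) : ℕ → K := fun n =>
  if n = 0 then 0
  else if n = 1 then 1
  else - ∑ d ∈ Finset.Icc 2 n, coeff d g *
      coeff n ((PowerSeries.mk fun m => if h : m < n then invC g m else 0) ^ d)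
termination_by n => n
decreasing_by exact h

/-- The compositional inverse of `g = x + ⋯`. -/
noncomputable def kinv (g : PowerSeries K) : PowerSeries K := PowerSeries.mk (invC g)

lemma invC_zero (g : PowerSeries K) : invC g 0 = 0 := by rw [invC]; simp
lemma invC_one (g : PowerSeries K) : invC g 1 = 1 := by rw [invC]; simp

lemma kinv_zero (g : PowerSeries K) : constantCoeff (kinv g) = 0 := by
  rw [← coeff_zero_eq_constantCoeff_apply]; simp [kinv, invC_zero]

lemma kinv_one (g : PowerSeries K) : coeff 1 (kinv g) = 1 := by
  simp [kinv, invC_one]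

lemma comp_kinv {g : PowerSeries K} (hg0 : constantCoeff g = 0)
    (hg1 : coeff 1 g = 1) : comp g (kinv g) = X := by
  ext n
  rcases Nat.lt_or_ge n 2 with hn | hn
  · interval_cases n
    · rw [coeff_comp]
      simp [coeff_zero_eq_constantCoeff_apply, hg0]
    · rw [coeff_comp]
      have : Finset.range 2 = {0, 1} := rfl
      rw [this, Finset.sum_insert (by simp), Finset.sum_singleton, pow_one, pow_zero,
        coeff_zero_eq_constantCoeff_apply, hg0, hg1, kinv_one]
      simp
  · have hsplit : Finset.range (n + 1) = insert 0 (insert 1 (Finset.Icc 2 n)) := by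
      ext x; simp; omega
    rw [coeff_comp, hsplit, Finset.sum_insert (by simp), Finset.sum_insert (by simp)]
    have h0 : coeff 0 g * coeff n (kinv g ^ 0) = 0 := by
      rw [coeff_zero_eq_constantCoeff_apply, hg0, zero_mul]
    have h1 : coeff 1 g * coeff n (kinv g ^ 1) = invC g n := by
      rw [hg1, one_mul, pow_one]; simp [kinv]
    have h2 : ∀ d ∈ Finset.Icc 2 n, coeff d g * coeff n (kinv g ^ d)
        = coeff d g *
          coeff n ((PowerSeries.mk fun m => if h : m < n then invC g m else 0) ^ d) := by
      intro d hd
      simp only [Finset.mem_Icc] at hd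
      congr 1
      apply coeff_pow_congr (kinv_zero g) _ _ hd.1
      · rw [← coeff_zero_eq_constantCoeff_apply]
        simp [invC_zero g, hd.2]
      · intro m hm
        simp [kinv, hm]
    rw [h0, h1, Finset.sum_congr rfl h2, zero_add]
    have hrec : invC g n = - ∑ d ∈ Finset.Icc 2 n, coeff d g *
        coeff n ((PowerSeries.mk fun m => if h : m < n then invC g m else 0) ^ d) := by
      rw [invC]
      rw [if_neg (by omega), if_neg (by omega)]
    rw [hrec, neg_add_cancel]
    rw [PowerSeries.coeff_X, if_neg (by omega)]

lemma comp_g_zero {f g : PowerSeries K} (hf : constantCoeff f = 0)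
    (hg : constantCoeff g = 0) : constantCoeff (comp f g) = 0 := by
  rw [constantCoeff_comp, hf]

/-- Every Riordan element has a left inverse. -/
lemma RiordanElem.exists_left_inv (a : RiordanElem K) : ∃ b : RiordanElem K, b * a = 1 := by
  have hcc : constantCoeff (comp a.h (kinv a.g)) = ((1 : Kˣ) : K) := by
    rw [constantCoeff_comp, a.h_zero]; rfl
  refine ⟨⟨PowerSeries.invOfUnit (comp a.h (kinv a.g)) 1, kinv a.g, ?_, kinv_zero _, kinv_one _⟩,
    ?_⟩
  · rw [PowerSeries.constantCoeff_invOfUnit]; simp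
  · ext1
    · show PowerSeries.invOfUnit (comp a.h (kinv a.g)) 1 * comp a.h (kinv a.g) = 1
      exact PowerSeries.invOfUnit_mul _ 1 hcc
    · show comp a.g (kinv a.g) = X
      exact comp_kinv a.g_zero a.g_one

lemma RiordanElem.exists_inv (a : RiordanElem K) : ∃ b : RiordanElem K, a * b = 1 ∧ b * a = 1 := by
  obtain ⟨b, hba⟩ := a.exists_left_inv
  obtain ⟨c, hcb⟩ := b.exists_left_inv
  have hac : a = c := by
    calc a = 1 * a := (one_mul a).symm
    _ = (c * b) * a := by rw [hcb]
    _ = c * (b * a) := mul_assoc _ _ _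
    _ = c := by rw [hba, mul_one]
  exact ⟨b, by rw [hac, hcb], hba⟩

/-- Every Riordan element gives a unit of the Riordan group. -/
noncomputable def RiordanElem.toUnit (a : RiordanElem K) : RiordanGroup K :=
  ⟨a, a.exists_inv.choose, a.exists_inv.choose_spec.1, a.exists_inv.choose_spec.2⟩

@[simp] lemma RiordanElem.toUnit_val (a : RiordanElem K) : (a.toUnit : RiordanElem K) = a := rfl


/-- The subset `R(I,J) = H(I) ⋊ N(J)` of the Riordan group over `F_p`:
pairs `(h, g)` with `h = 1 + ∑_{i ∈ I} aᵢ xⁱ` and `g = x + ∑_{j ∈ J} bⱼ x^{j+1}`. -/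
def RIJ (p : ℕ) (I J : Set ℕ) : Set (RiordanGroup (ZMod p)) :=
  {u | (∀ i, 0 < i → i ∉ I → coeff i ((u : RiordanElem (ZMod p)).h) = 0) ∧
       (∀ j, 0 < j → j ∉ J → coeff (j + 1) ((u : RiordanElem (ZMod p)).g) = 0)}

/-- `(I, J)` is an admissible index-pair: `R(I,J)` is a subgroup of `R(F_p)`. -/
def IsAdmissible (p : ℕ) (I J : Set ℕ) : Prop :=
  ∃ S : Subgroup (RiordanGroup (ZMod p)), (S : Set (RiordanGroup (ZMod p))) = RIJ p I J

/-- if `(I, J)` is an admissible index-pair and `J` is nonempty, then `J`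
is infinite. -/
theorem admissible_J_infinite (p : ℕ) (hp : p.Prime) (I J : Set ℕ)
    (hI : 0 ∉ I) (hJ : 0 ∉ J) (hadm : IsAdmissible p I J) (hne : J.Nonempty) :
    J.Infinite := by
  haveI : Fact p.Prime := ⟨hp⟩
  by_contra hinf
  rw [Set.not_infinite] at hinf
  have hFne : hinf.toFinset.Nonempty := by rwa [Set.Finite.toFinset_nonempty]
  set m := hinf.toFinset.max' hFne with hm
  have hmJ : m ∈ J := hinf.mem_toFinset.1 (hinf.toFinset.max'_mem hFne)
  have hmax : ∀ j ∈ J, j ≤ m := fun j hj => hinf.toFinset.le_max' j (hinf.mem_toFinset.2 hj)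
  have hm1 : 1 ≤ m := by
    rcases Nat.eq_zero_or_pos m with h0 | h0
    · exact absurd (h0 ▸ hmJ) hJ
    · exact h0
  set g₀ : PowerSeries (ZMod p) := X + X ^ (m + 1) with hg₀
  have hg0 : constantCoeff g₀ = 0 := by
    rw [hg₀, map_add, map_pow, constantCoeff_X, zero_pow (by omega), add_zero]
  have hg1 : coeff 1 g₀ = 1 := by
    rw [hg₀, map_add, coeff_one_X, coeff_X_pow, if_neg (by omega), add_zero]
  have hcg : ∀ k, coeff k g₀
      = (if k = 1 then 1 else 0) + (if k = m + 1 then 1 else 0) := by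
    intro k
    rw [hg₀, map_add, PowerSeries.coeff_X, coeff_X_pow]
  set a : RiordanElem (ZMod p) := ⟨1, g₀, map_one _, hg0, hg1⟩ with ha
  obtain ⟨S, hS⟩ := hadm
  have haS : a.toUnit ∈ S := by
    rw [← SetLike.mem_coe, hS]
    constructor
    · intro i hi _
      show coeff i (1 : PowerSeries (ZMod p)) = 0
      rw [PowerSeries.coeff_one, if_neg (by omega)]
    · intro j hj hjJ
      show coeff (j + 1) g₀ = 0
      have hjm : j ≠ m := fun h => hjJ (h ▸ hmJ)
      rw [hcg, if_neg (by omega), if_neg (by omega), add_zero]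
  have hsq := S.mul_mem haS haS
  rw [← SetLike.mem_coe, hS] at hsq
  have hmm : 1 ≤ m * m := Nat.one_le_iff_ne_zero.2 (by positivity)
  have h2 := hsq.2 (m * m + 2 * m) (by omega)
    (fun hmem => by have := hmax _ hmem; nlinarith)
  have hval : ((a.toUnit * a.toUnit : RiordanGroup (ZMod p)) : RiordanElem (ZMod p)).g
      = comp g₀ g₀ := by
    rw [Units.val_mul, RiordanElem.mul_g, RiordanElem.toUnit_val]
  rw [hval] at h2
  -- now compute the coefficient at degree m*m + 2*m + 1 = (m+1)^2
  have hpow : coeff (m * m + 2 * m + 1) (g₀ ^ (m + 1)) = 1 := by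
    have hfact : g₀ ^ (m + 1) = X ^ (m + 1) * (1 + X ^ m) ^ (m + 1) := by
      rw [hg₀, ← mul_pow]
      congr 1
      ring
    have hN : m * m + 2 * m + 1 = m * (m + 1) + (m + 1) := by ring
    rw [hN, hfact, coeff_X_pow_mul, add_comm (1 : PowerSeries (ZMod p)) (X ^ m), add_pow,
      map_sum]
    have hterm : ∀ k ∈ Finset.range (m + 2),
        coeff (m * (m + 1))
          ((X ^ m) ^ k * 1 ^ (m + 1 - k) * ((m + 1).choose k : PowerSeries (ZMod p)))
        = if k = m + 1 then 1 else 0 := by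
      intro k hk
      simp only [Finset.mem_range] at hk
      rw [one_pow, mul_one, ← pow_mul, ← map_natCast (C (R := ZMod p)) ((m + 1).choose k),
        coeff_mul_C, coeff_X_pow]
      by_cases hkm : k = m + 1
      · subst hkm
        rw [if_pos rfl, if_pos (by ring), Nat.choose_self, Nat.cast_one, one_mul]
      · rw [if_neg hkm, if_neg (fun h => hkm (Nat.eq_of_mul_eq_mul_left hm1 h).symm),
          zero_mul]
    rw [Finset.sum_congr rfl hterm, Finset.sum_ite_eq' (Finset.range (m + 2)) (m + 1)
      (fun _ => (1 : ZMod p)), if_pos (by simp)]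
  have hcomp : coeff (m * m + 2 * m + 1) (comp g₀ g₀) = 1 := by
    rw [coeff_comp]
    have hsum : ∀ d ∈ Finset.range (m * m + 2 * m + 1 + 1),
        coeff d g₀ * coeff (m * m + 2 * m + 1) (g₀ ^ d)
        = (if d = 1 then coeff (m * m + 2 * m + 1) (g₀ ^ d) else 0)
          + (if d = m + 1 then coeff (m * m + 2 * m + 1) (g₀ ^ d) else 0) := by
      intro d _
      rw [hcg, add_mul]
      simp only [ite_mul, one_mul, zero_mul]
    rw [Finset.sum_congr rfl hsum, Finset.sum_add_distrib,
      Finset.sum_ite_eq' (Finset.range (m * m + 2 * m + 1 + 1)) 1,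
      Finset.sum_ite_eq' (Finset.range (m * m + 2 * m + 1 + 1)) (m + 1),
      if_pos (by simp only [Finset.mem_range]; omega), if_pos (by simp only [Finset.mem_range]; nlinarith), pow_one, hcg,
      if_neg (by nlinarith), if_neg (by nlinarith), add_zero, zero_add, hpow]
  rw [hcomp] at h2
  exact one_ne_zero h2

end RiordanPaper
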